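/- Let I = ⟨z_1,…,z_m⟩ be a radical monomial ideal (z_i squarefree monomials) in S = C[x_1,…,x_r], and let B_α be the ideal generated by the products Π_{π̃(ρ_j) ∉ σ} x_j over all maximal cones σ of Σ_α. Then the irreducible components of V(B_α) ⊆ C^r are exactly the coordinate subspaces V(x_{j_1},…,x_{j_s}) for the collections {ρ_{j_1},…,ρ_{j_s}} of rays of Σ that are primitive with respect to Σ_α. -/

import Mathlib

/-!
STATEMENT 15: Let `I = ⟨z_1,…,z_m⟩` be a radical monomial ideal and `B_α` the ideal
generated by the products `Π_{π̃(ρ_j) ∉ σ} x_j` over the maximal cones `σ` of the fan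
`S_α` of a semiample class `α` (with map of fans `π̃ : S → S_α` induced by a quotient
`A : N_ℝ → N_ℝ/L`).  Then the irreducible components of `V(B_α) ⊆ ℂ^r` are exactly
the coordinate subspaces `V(x_{j_1},…,x_{j_s})` for the collections
`{ρ_{j_1},…,ρ_{j_s}}` of rays of `S` that are primitive with respect to `S_α`.

"Exactly the irreducible components" is expressed by: `V(B_α)` is the union of these
(irreducible) coordinate subspaces, and they form an antichain (none is contained in
another), so they are the maximal irreducible closed subsets of `V(B_α)`. -/

/-- Cones of `S` recorded by the index sets of their rays. -/
def coneOf {n r : ℕ} (v : Fin r → Fin n → ℝ) (s : Finset (Fin r)) :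
    Set (Fin n → ℝ) :=
  {x | ∃ t : Fin r → ℝ, (∀ j, 0 ≤ t j) ∧ (∀ j ∉ s, t j = 0) ∧ x = ∑ j, t j • v j}

/-- The fan `S_α` in the quotient space `ℝ^{n'} = N_ℝ/L`, as a finite collection of
convex cones. -/
structure QuotFan (n' : ℕ) where
  cones : Set (Set (Fin n' → ℝ))
  finite : cones.Finite
  nonempty : ∀ σ ∈ cones, (σ : Set (Fin n' → ℝ)).Nonempty
  convex : ∀ σ ∈ cones, Convex ℝ σ
  isCone : ∀ σ ∈ cones, ∀ x ∈ σ, ∀ t : ℝ, 0 ≤ t → t • x ∈ σ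

/-- Maximal cones of `S_α`. -/
def QuotFan.IsMaxCone {n' : ℕ} (Sα : QuotFan n') (σ : Set (Fin n' → ℝ)) : Prop :=
  σ ∈ Sα.cones ∧ ∀ τ ∈ Sα.cones, σ ⊆ τ → σ = τ

/-- A collection of rays of `S` is primitive with respect to `S_α`: the image under
`π̃` of the whole collection lies in no cone of `S_α`, but the image of every proper
subset lies in some cone. -/
def IsPrimitive {n n' r : ℕ} (v : Fin r → Fin n → ℝ)
    (A : (Fin n → ℝ) →ₗ[ℝ] (Fin n' → ℝ)) (Sα : QuotFan n')
    (s : Finset (Fin r)) : Prop :=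
  (¬ ∃ σ ∈ Sα.cones, ∀ j ∈ s, A (v j) ∈ σ) ∧
    ∀ t ⊂ s, ∃ σ ∈ Sα.cones, ∀ j ∈ t, A (v j) ∈ σ

/-- The vanishing locus of `B_α` in `ℂ^r`: points killing, for every maximal cone `σ`
of `S_α`, the monomial `Π_{π̃(ρ_j) ∉ σ} x_j`. -/
def VBalpha {n n' r : ℕ} (v : Fin r → Fin n → ℝ)
    (A : (Fin n → ℝ) →ₗ[ℝ] (Fin n' → ℝ)) (Sα : QuotFan n') : Set (Fin r → ℂ) :=
  {x | ∀ σ, Sα.IsMaxCone σ → ∃ j, A (v j) ∉ σ ∧ x j = 0}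

/-- The coordinate subspace `V(x_{j_1},…,x_{j_s})`. -/
def coordSubspace {r : ℕ} (s : Finset (Fin r)) : Set (Fin r → ℂ) :=
  {x | ∀ j ∈ s, x j = 0}

lemma exists_max_above {α : Type*} {C : Set (Set α)} (hC : C.Finite) {σ : Set α}
    (hσ : σ ∈ C) : ∃ τ, (τ ∈ C ∧ ∀ υ ∈ C, τ ⊆ υ → τ = υ) ∧ σ ⊆ τ := by
  obtain ⟨τ, hτ, hmax⟩ := Set.Finite.exists_maximalFor id {υ ∈ C | σ ⊆ υ}
    (hC.subset (fun y hy => hy.1)) ⟨σ, hσ, subset_rfl⟩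
  exact ⟨τ, ⟨hτ.1, fun υ hυ hsub => hsub.antisymm (hmax ⟨hυ, hτ.2.trans hsub⟩ hsub)⟩, hτ.2⟩

theorem irreducible_components_of_VBalpha
    {n n' r : ℕ} (v : Fin r → Fin n → ℝ) (cones : Finset (Finset (Fin r)))
    (A : (Fin n → ℝ) →ₗ[ℝ] (Fin n' → ℝ)) (Sα : QuotFan n')
    -- `π̃ : S → S_α` is a map of fans: each cone of `S` maps into a cone of `S_α`
    (hmap : ∀ s ∈ cones, ∃ σ ∈ Sα.cones, ∀ x ∈ coneOf v s, A x ∈ σ)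
    -- the rays of `S` are among its cones
    (hrays : ∀ j : Fin r, {j} ∈ cones) :
    VBalpha v A Sα = (⋃ s ∈ {s | IsPrimitive v A Sα s}, coordSubspace s) ∧
      ∀ s t : Finset (Fin r), IsPrimitive v A Sα s → IsPrimitive v A Sα t →
        s ≠ t → ¬ (coordSubspace s ⊆ coordSubspace t) := by
  constructor
  · ext x
    simp only [Set.mem_iUnion, Set.mem_setOf_eq]
    constructor
    · intro hx
      set Z : Finset (Fin r) := Finset.univ.filter (fun j => x j = 0) with hZ
      have hPZ : ¬ ∃ σ ∈ Sα.cones, ∀ j ∈ Z, A (v j) ∈ σ := by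
        rintro ⟨σ, hσ, hall⟩
        obtain ⟨τ, hτmax, hστ⟩ := exists_max_above Sα.finite hσ
        obtain ⟨j, hjn, hj0⟩ := hx τ hτmax
        exact hjn (hστ (hall j (by simp [hZ, hj0])))
      -- choose a minimal subset of Z with the same property
      have hTfin : ({t : Finset (Fin r) | t ⊆ Z ∧
          ¬ ∃ σ ∈ Sα.cones, ∀ j ∈ t, A (v j) ∈ σ}).Finite := Set.toFinite _
      obtain ⟨s, hs, hmin⟩ := Set.Finite.exists_minimalFor id _ hTfin
        ⟨Z, subset_rfl, hPZ⟩
      refine ⟨s, ⟨hs.2, fun t ht => ?_⟩, fun j hj => ?_⟩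
      · by_contra hPt
        exact ht.ne (ht.subset.antisymm (hmin ⟨ht.subset.trans hs.1, hPt⟩ ht.subset))
      · have := hs.1 hj
        simp [hZ] at this
        exact this
    · rintro ⟨s, ⟨hs1, _⟩, hxs⟩ σ ⟨hσ, _⟩
      by_contra h
      push_neg at h
      exact hs1 ⟨σ, hσ, fun j hj => by_contra fun hn => h j hn (hxs j hj)⟩
  · intro s t hs ht hne hsub
    have hts : t ⊆ s := by
      intro j hj
      by_contra hjs
      have hx : (fun i => if i ∈ s then (0 : ℂ) else 1) ∈ coordSubspace s :=
        fun i hi => by simp [hi]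
      have := hsub hx j hj
      simp [hjs] at this
    exact ht.1 (hs.2 t (hts.ssubset_of_ne (fun h => hne h.symm)))
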